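/- A general ternary quartic F has catalecticant map α_{2,F} : S_2 V → S_2 V* of full rank 6; in particular, there exists a ternary quartic whose middle catalecticant is invertible. -/

import Mathlib

open MvPolynomial

/-- The differential operator on `MvPolynomial σ ℂ` given by the monomial with
exponent vector `m`: the composite of `m i`-fold partial derivatives in each variable `i`. -/
noncomputable def diffOpMon {σ : Type*} [Fintype σ] [DecidableEq σ] (m : σ →₀ ℕ) :
    Module.End ℂ (MvPolynomial σ ℂ) :=
  (m.toMultiset.toList.map fun i => (pderiv i).toLinearMap).prod

/-- `diffOp D F` is the result of applying the polynomial `D` (in the dual variables)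
to `F` as a constant-coefficient differential operator (apolarity action). -/
noncomputable def diffOp {σ : Type*} [Fintype σ] [DecidableEq σ]
    (D F : MvPolynomial σ ℂ) : MvPolynomial σ ℂ :=
  (AddMonoidAlgebra.coeff D).sum fun m c => c • diffOpMon m F

/-- The rank of the `k`-th catalecticant of `F`: the dimension of the space spanned by all
`D(∂)F` for `D` homogeneous of degree `k`. -/
noncomputable def cataRank {σ : Type*} [Fintype σ] [DecidableEq σ]
    (k : ℕ) (F : MvPolynomial σ ℂ) : ℕ :=
  Module.finrank ℂ
    (Submodule.span ℂ ((fun D => diffOp D F) '' {D : MvPolynomial σ ℂ | D.IsHomogeneous k}))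



lemma coeff_pderiv {σ : Type*} [DecidableEq σ] (i : σ) (F : MvPolynomial σ ℂ) (n : σ →₀ ℕ) :
    coeff n (pderiv i F) = (n i + 1) * coeff (n + Finsupp.single i 1) F := by
  induction F using MvPolynomial.induction_on' with
  | add p q hp hq => simp [hp, hq, mul_add]
  | monomial s a =>
    rw [pderiv_monomial, coeff_monomial, coeff_monomial]
    split_ifs with h1 h2 h2
    · subst h2; simp only [Finsupp.add_apply, Finsupp.single_eq_same]; push_cast; ring
    · rcases Nat.eq_zero_or_pos (s i) with h0 | h0
      · simp [h0]
      · exfalso; apply h2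
        ext j
        have hh := DFunLike.congr_fun h1 j
        simp only [Finsupp.tsub_apply, Finsupp.single_apply, Finsupp.add_apply] at hh ⊢
        rcases eq_or_ne i j with rfl | hj
        · simp at hh ⊢; omega
        · simp [hj] at hh ⊢; omega
    · exfalso; apply h1; subst h2
      ext j
      simp only [Finsupp.tsub_apply, Finsupp.single_apply, Finsupp.add_apply]
      rcases eq_or_ne i j with rfl | hj
      · simp
      · simp [hj]
    · ring

lemma coeff_listderiv {σ : Type*} [Fintype σ] [DecidableEq σ] (F : MvPolynomial σ ℂ)
    (l : List σ) (n : σ →₀ ℕ) :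
    coeff n ((l.map fun i => (pderiv i).toLinearMap).prod F) =
      (∏ i : σ, Nat.descFactorial (n i + l.count i) (l.count i) : ℕ) *
        coeff (n + (l.map fun j => Finsupp.single j 1).sum) F := by
  induction l generalizing n with
  | nil => simp
  | cons j t ih =>
    have hstep : ((((j :: t).map fun i => (pderiv i).toLinearMap).prod) F)
        = pderiv j ((t.map fun i => (pderiv i).toLinearMap).prod F) := by
      simp [List.map_cons, List.prod_cons]
    rw [hstep, _root_.coeff_pderiv, ih]
    have hexp : n + Finsupp.single j 1 + (t.map fun j => Finsupp.single j 1).sum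
        = n + ((j :: t).map fun j => Finsupp.single j 1).sum := by
      simp only [List.map_cons, List.sum_cons]; abel
    rw [hexp, ← mul_assoc]
    congr 1
    have hcnt : ∀ i : σ, (j :: t).count i = t.count i + if i = j then 1 else 0 := by
      intro i; by_cases h : i = j
      · subst h; simp [List.count_cons]
      · simp [List.count_cons, h, Ne.symm h]
    have hkey : (n j + 1) *
        ∏ i : σ, Nat.descFactorial ((n + Finsupp.single j 1 : σ →₀ ℕ) i + t.count i) (t.count i)
        = ∏ i : σ, Nat.descFactorial (n i + (j :: t).count i) ((j :: t).count i) := by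
      rw [← Finset.mul_prod_erase Finset.univ
            (fun i => Nat.descFactorial ((n + Finsupp.single j 1 : σ →₀ ℕ) i + t.count i) (t.count i))
            (Finset.mem_univ j),
          ← Finset.mul_prod_erase Finset.univ
            (fun i => Nat.descFactorial (n i + (j :: t).count i) ((j :: t).count i))
            (Finset.mem_univ j),
          ← mul_assoc]
      congr 1
      · simp only [Finsupp.add_apply, Finsupp.single_eq_same, hcnt, if_pos rfl, if_true]
        have e1 : n j + (t.count j + 1) = (n j + 1 + t.count j) + 1 - 1 := by omega
        rw [Nat.descFactorial_succ]
        have e2 : n j + (t.count j + 1) - t.count j = n j + 1 := by omega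
        have e3 : n j + (t.count j + 1) = n j + 1 + t.count j := by omega
        rw [e2, e3]
      · apply Finset.prod_congr rfl
        intro i hi
        have hij : i ≠ j := (Finset.mem_erase.mp hi).1
        simp [Finsupp.add_apply, Finsupp.single_apply, Ne.symm hij, hcnt, hij]
    rw [← hkey]
    push_cast
    ring

lemma listsum_single_apply {σ : Type*} [DecidableEq σ] (l : List σ) (i : σ) :
    ((l.map fun j => Finsupp.single j 1).sum : σ →₀ ℕ) i = l.count i := by
  induction l with
  | nil => simp
  | cons j t ih =>
    by_cases h : i = j
    · subst h; simp [List.count_cons, ih, Nat.add_comm]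
    · simp [List.count_cons, h, Ne.symm h, ih, Finsupp.single_apply]

lemma count_toList {σ : Type*} [DecidableEq σ] (m : σ →₀ ℕ) (i : σ) :
    m.toMultiset.toList.count i = m i := by
  rw [← Multiset.coe_count, Multiset.coe_toList, Finsupp.count_toMultiset]

lemma coeff_diffOpMon {σ : Type*} [Fintype σ] [DecidableEq σ] (F : MvPolynomial σ ℂ)
    (m n : σ →₀ ℕ) :
    coeff n (diffOpMon m F) =
      (∏ i : σ, Nat.descFactorial (n i + m i) (m i) : ℕ) * coeff (n + m) F := by
  have hsum : ((m.toMultiset.toList.map fun j => Finsupp.single j 1).sum : σ →₀ ℕ) = m := by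
    ext i; rw [listsum_single_apply, count_toList]
  rw [diffOpMon, coeff_listderiv, hsum]



  simp only [count_toList]

def eTab : Fin 6 → Fin 3 → ℕ :=
  ![![2,0,0],![0,2,0],![0,0,2],![1,1,0],![1,0,1],![0,1,1]]

noncomputable def eexp : Fin 6 → (Fin 3 →₀ ℕ) :=
  fun i => Finsupp.equivFunOnFinite.symm (eTab i)

lemma eexp_apply (i : Fin 6) (k : Fin 3) : eexp i k = eTab i k := by
  simp [eexp]

lemma eqfin3 (u v : Fin 3 →₀ ℕ) (h0 : u 0 = v 0) (h1 : u 1 = v 1) (h2 : u 2 = v 2) :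
    u = v := by
  ext k; fin_cases k <;> assumption

lemma deg3 (m : Fin 3 →₀ ℕ) : m.degree = m 0 + m 1 + m 2 := by
  rw [Finsupp.degree_apply,
    Finset.sum_subset (Finset.subset_univ m.support)
      (by intro i _ hi; simpa using (Finsupp.notMem_support_iff.mp hi)),
    Fin.sum_univ_three]

lemma mem_e {m : Fin 3 →₀ ℕ} (h : m 0 + m 1 + m 2 = 2) : ∃ i, m = eexp i := by
  have hcases : (m 0 = 2 ∧ m 1 = 0 ∧ m 2 = 0) ∨ (m 0 = 0 ∧ m 1 = 2 ∧ m 2 = 0) ∨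
      (m 0 = 0 ∧ m 1 = 0 ∧ m 2 = 2) ∨ (m 0 = 1 ∧ m 1 = 1 ∧ m 2 = 0) ∨
      (m 0 = 1 ∧ m 1 = 0 ∧ m 2 = 1) ∨ (m 0 = 0 ∧ m 1 = 1 ∧ m 2 = 1) := by omega
  rcases hcases with ⟨h0,h1,h2⟩|⟨h0,h1,h2⟩|⟨h0,h1,h2⟩|⟨h0,h1,h2⟩|⟨h0,h1,h2⟩|⟨h0,h1,h2⟩
  · refine ⟨0, eqfin3 _ _ ?_ ?_ ?_⟩ <;> rw [eexp_apply] <;>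
      simp only [h0, h1, h2] <;> decide
  · refine ⟨1, eqfin3 _ _ ?_ ?_ ?_⟩ <;> rw [eexp_apply] <;>
      simp only [h0, h1, h2] <;> decide
  · refine ⟨2, eqfin3 _ _ ?_ ?_ ?_⟩ <;> rw [eexp_apply] <;>
      simp only [h0, h1, h2] <;> decide
  · refine ⟨3, eqfin3 _ _ ?_ ?_ ?_⟩ <;> rw [eexp_apply] <;>
      simp only [h0, h1, h2] <;> decide
  · refine ⟨4, eqfin3 _ _ ?_ ?_ ?_⟩ <;> rw [eexp_apply] <;>
      simp only [h0, h1, h2] <;> decide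
  · refine ⟨5, eqfin3 _ _ ?_ ?_ ?_⟩ <;> rw [eexp_apply] <;>
      simp only [h0, h1, h2] <;> decide

lemma eexp_degree (i : Fin 6) : (eexp i).degree = 2 := by
  rw [deg3, eexp_apply, eexp_apply, eexp_apply]
  revert i; decide

lemma span_eq (F : MvPolynomial (Fin 3) ℂ) :
    Submodule.span ℂ ((fun D => diffOp D F) '' {D : MvPolynomial (Fin 3) ℂ | D.IsHomogeneous 2})
      = Submodule.span ℂ (Set.range fun i : Fin 6 => diffOpMon (eexp i) F) := by
  apply le_antisymm
  · rw [Submodule.span_le]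
    rintro x ⟨D, hD, rfl⟩
    have hx : (fun D => diffOp D F) D = (AddMonoidAlgebra.coeff D).sum fun m c => c • diffOpMon m F := rfl
    rw [hx, Finsupp.sum]
    apply Submodule.sum_mem
    intro m hm
    apply Submodule.smul_mem
    apply Submodule.subset_span
    have hco : coeff m D ≠ 0 := MvPolynomial.mem_support_iff.mp hm
    have hw := hD hco
    have hdeg : m.degree = 2 := by
      rw [Finsupp.degree_eq_weight_one]; exact hw
    rw [deg3] at hdeg
    obtain ⟨i, rfl⟩ := mem_e hdeg
    exact ⟨i, rfl⟩
  · rw [Submodule.span_le]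
    rintro x ⟨i, rfl⟩
    apply Submodule.subset_span
    refine ⟨monomial (eexp i) 1, isHomogeneous_monomial 1 (eexp_degree i), ?_⟩
    show diffOp (monomial (eexp i) 1) F = _
    rw [diffOp, MvPolynomial.sum_monomial_eq, one_smul]
    simp

lemma eqiff (u v : Fin 3 →₀ ℕ) : u = v ↔ (u 0 = v 0 ∧ u 1 = v 1 ∧ u 2 = v 2) :=
  ⟨by rintro rfl; exact ⟨rfl, rfl, rfl⟩, fun ⟨h0, h1, h2⟩ => eqfin3 _ _ h0 h1 h2⟩

noncomputable def gam (i j : Fin 6) : ℕ :=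
  ∏ k : Fin 3, Nat.descFactorial (eexp j k + eexp i k) (eexp i k)

lemma gam_eq (i j : Fin 6) :
    gam i j = ∏ k : Fin 3, Nat.descFactorial (eTab j k + eTab i k) (eTab i k) := by
  simp [gam, eexp_apply]

/-- the catalecticant matrix of `F` -/
noncomputable def MF (F : MvPolynomial (Fin 3) ℂ) : Matrix (Fin 6) (Fin 6) ℂ :=
  Matrix.of fun i j => coeff (eexp j) (diffOpMon (eexp i) F)

lemma MF_apply (F : MvPolynomial (Fin 3) ℂ) (i j : Fin 6) :
    MF F i j = (gam i j : ℂ) * coeff (eexp j + eexp i) F := by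
  rw [MF, Matrix.of_apply, coeff_diffOpMon, gam]

lemma hsum4 (i j : Fin 6) :
    ((eexp j + eexp i : Fin 3 →₀ ℕ) 0) + ((eexp j + eexp i : Fin 3 →₀ ℕ) 1)
      + ((eexp j + eexp i : Fin 3 →₀ ℕ) 2) = 4 := by
  simp only [Finsupp.add_apply, eexp_apply]
  revert i j; decide

noncomputable def Delta : MvPolynomial {m : Fin 3 →₀ ℕ // m 0 + m 1 + m 2 = 4} ℂ :=
  (Matrix.of fun i j : Fin 6 =>
    (C (gam i j : ℂ)) * X (⟨eexp j + eexp i, hsum4 i j⟩ :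
      {m : Fin 3 →₀ ℕ // m 0 + m 1 + m 2 = 4})).det

lemma eval_delta (F : MvPolynomial (Fin 3) ℂ) :
    eval (fun m : {m : Fin 3 →₀ ℕ // m 0 + m 1 + m 2 = 4} => coeff m.1 F) Delta
      = (MF F).det := by
  rw [Delta, RingHom.map_det]
  congr 1
  ext i j
  simp [Matrix.map_apply, MF_apply]

lemma rank_of_det {F : MvPolynomial (Fin 3) ℂ} (h : (MF F).det ≠ 0) :
    Module.finrank ℂ
      (Submodule.span ℂ (Set.range fun i : Fin 6 => diffOpMon (eexp i) F)) = 6 := by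
  have hU : IsUnit (MF F) := (Matrix.isUnit_iff_isUnit_det _).mpr (isUnit_iff_ne_zero.mpr h)
  have hrows : LinearIndependent ℂ (fun i => MF F i) :=
    Matrix.linearIndependent_rows_iff_isUnit.mpr hU
  have hv : LinearIndependent ℂ (fun i : Fin 6 => diffOpMon (eexp i) F) := by
    apply LinearIndependent.of_comp (LinearMap.pi fun j : Fin 6 => lcoeff ℂ (eexp j))
    exact hrows
  rw [finrank_span_eq_card hv, Fintype.card_fin]

def iab (a b i j : Fin 6) : ℕ :=
  if (∀ k : Fin 3, eTab a k + eTab b k = eTab j k + eTab i k) then 1 else 0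

noncomputable def F0 : MvPolynomial (Fin 3) ℂ :=
  monomial (eexp 0 + eexp 1) 1 + monomial (eexp 0 + eexp 2) 1 + monomial (eexp 1 + eexp 2) 1

lemma cond_iff (a b i j : Fin 6) :
    (eexp a + eexp b = eexp j + eexp i) ↔
      (∀ k : Fin 3, eTab a k + eTab b k = eTab j k + eTab i k) := by
  rw [eqiff]
  simp only [Finsupp.add_apply, eexp_apply]
  constructor
  · rintro ⟨h0, h1, h2⟩ k; fin_cases k <;> assumption
  · intro h; exact ⟨h 0, h 1, h 2⟩

lemma hcoeff (i j : Fin 6) :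
    coeff (eexp j + eexp i) F0 = ((iab 0 1 i j + iab 0 2 i j + iab 1 2 i j : ℕ) : ℂ) := by
  simp only [F0, coeff_add, coeff_monomial, cond_iff, iab]
  push_cast [apply_ite (Nat.cast : ℕ → ℂ)]
  norm_num

def NTab : Fin 6 → Fin 6 → ℤ := fun i j =>
  (((∏ k : Fin 3, Nat.descFactorial (eTab j k + eTab i k) (eTab i k)) *
    (iab 0 1 i j + iab 0 2 i j + iab 1 2 i j) : ℕ) : ℤ)

lemma hM : MF F0 = (Matrix.of NTab).map (Int.castRingHom ℂ) := by
  ext i j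
  rw [Matrix.map_apply, Matrix.of_apply, MF_apply, gam_eq, hcoeff, NTab]
  push_cast [Int.coe_castRingHom]
  ring

lemma NTab_eq : (Matrix.of NTab) = !![0,2,2,0,0,0; 2,0,2,0,0,0; 2,2,0,0,0,0;
    0,0,0,4,0,0; 0,0,0,0,4,0; 0,0,0,0,0,4] := by decide

set_option maxHeartbeats 4000000 in
set_option maxRecDepth 20000 in
lemma detNTab : (Matrix.of NTab).det = 1024 := by
  rw [NTab_eq]
  simp [Matrix.det_succ_row_zero, Fin.sum_univ_succ]
  decide

lemma detMF0 : (MF F0).det ≠ 0 := by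
  rw [hM, ← RingHom.mapMatrix_apply, ← RingHom.map_det, detNTab]
  norm_num

/-- a general ternary quartic has middle catalecticant of full rank 6
(the locus where this fails is cut out by a nonzero polynomial in the coefficients);
in particular there exists a ternary quartic with invertible middle catalecticant. -/
theorem stmt_5 :
    (∃ Δ : MvPolynomial {m : Fin 3 →₀ ℕ // m 0 + m 1 + m 2 = 4} ℂ, Δ ≠ 0 ∧
      ∀ F : MvPolynomial (Fin 3) ℂ, F.IsHomogeneous 4 →
        MvPolynomial.eval (fun m => MvPolynomial.coeff m.1 F) Δ ≠ 0 → cataRank 2 F = 6) ∧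
    (∃ F : MvPolynomial (Fin 3) ℂ, F.IsHomogeneous 4 ∧ cataRank 2 F = 6) := by
  have hrank : ∀ F : MvPolynomial (Fin 3) ℂ, (MF F).det ≠ 0 → cataRank 2 F = 6 := by
    intro F hdet
    have h1 : cataRank 2 F = Module.finrank ℂ
        (Submodule.span ℂ ((fun D => diffOp D F) ''
          {D : MvPolynomial (Fin 3) ℂ | D.IsHomogeneous 2})) := rfl
    rw [h1, span_eq F]
    exact rank_of_det hdet
  have hF0hom : F0.IsHomogeneous 4 := by
    refine (MvPolynomial.IsHomogeneous.add
      (MvPolynomial.IsHomogeneous.add (isHomogeneous_monomial 1 ?_) (isHomogeneous_monomial 1 ?_))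
      (isHomogeneous_monomial 1 ?_)) <;>
    · rw [deg3]
      simp only [Finsupp.add_apply, eexp_apply]
      decide
  constructor
  · refine ⟨Delta, ?_, ?_⟩
    · intro h0
      apply detMF0
      rw [← eval_delta F0, h0, map_zero]
    · intro F _ hev
      apply hrank
      rw [← eval_delta]
      exact hev
  · exact ⟨F0, hF0hom, hrank F0 detMF0⟩
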